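/- Let G be a connected topological group acting on the n-dimensional torus Tⁿ = (Circle)ⁿ by group automorphisms, via a homomorphism ρ : G → Aut(Tⁿ) such that the map (g, t) ↦ ρ(g)(t) from G × Tⁿ to Tⁿ is continuous. Then the action is trivial: ρ(g) is the identity automorphism for every g ∈ G. -/

import Mathlib

open Real

/-- `Circle.exp` of a natural multiple. -/
lemma circle_exp_pow (x : ℝ) (m : ℕ) : Circle.exp x ^ m = Circle.exp (m * x) := by
  induction m with
  | zero => simp [Circle.exp_zero]
  | succ k ih =>
    rw [pow_succ, ih, ← Circle.exp_add]
    congr 1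
    push_cast
    ring

/-- Torsion points are dense in the circle. -/
lemma dense_torsion_circle :
    Dense {z : Circle | ∃ m : ℕ, 0 < m ∧ z ^ m = 1} := by
  have hsurj : Function.Surjective Circle.exp := fun z => ⟨Complex.arg z, Circle.exp_arg z⟩
  have h2pi : (2 * π) ≠ 0 := by positivity
  have hd1 : DenseRange (fun q : ℚ => (q : ℝ) * (2 * π)) := by
    have : DenseRange ((Homeomorph.mulRight₀ (2 * π) h2pi) ∘ (Rat.cast : ℚ → ℝ)) :=
      DenseRange.comp (Homeomorph.mulRight₀ (2 * π) h2pi).surjective.denseRange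
        Rat.denseRange_cast (Homeomorph.mulRight₀ (2 * π) h2pi).continuous
    exact this
  have hd2 : DenseRange (fun q : ℚ => Circle.exp ((q : ℝ) * (2 * π))) :=
    DenseRange.comp hsurj.denseRange hd1 Circle.exp.continuous
  refine Dense.mono ?_ hd2
  rintro _ ⟨q, rfl⟩
  refine ⟨q.den, q.pos, ?_⟩
  rw [circle_exp_pow]
  have hq : ((q.den : ℝ)) * ((q : ℝ) * (2 * π)) = (q.num : ℝ) * (2 * π) := by
    have : ((q : ℝ)) * (q.den : ℝ) = (q.num : ℝ) := by
      rw [← Rat.cast_natCast, ← Rat.cast_mul, Rat.mul_den_eq_num, Rat.cast_intCast]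
    rw [← this]; ring
  rw [hq, Circle.exp_int_mul_two_pi]

/-- Torsion points are dense in the torus. -/
lemma dense_torsion_torus (n : ℕ) :
    Dense {x : Fin n → Circle | ∃ m : ℕ, 0 < m ∧ x ^ m = 1} := by
  have hpi : Dense (Set.pi Set.univ
      (fun _ : Fin n => {z : Circle | ∃ m : ℕ, 0 < m ∧ z ^ m = 1})) :=
    dense_pi Set.univ (fun _ _ => dense_torsion_circle)
  refine hpi.mono ?_
  intro x hx
  have hx' : ∀ i, ∃ m : ℕ, 0 < m ∧ (x i) ^ m = 1 := fun i => hx i (Set.mem_univ i)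
  choose m hm hx using hx'
  refine ⟨∏ i, m i, Finset.prod_pos (fun i _ => hm i), ?_⟩
  funext i
  have hdvd : m i ∣ ∏ j, m j := Finset.dvd_prod_of_mem m (Finset.mem_univ i)
  obtain ⟨k, hk⟩ := hdvd
  simp only [Pi.pow_apply, Pi.one_apply, hk, pow_mul, hx i, one_pow]

/-- The `m`-torsion of the circle is finite. -/
lemma finite_torsion_circle (m : ℕ) (hm : 0 < m) :
    Set.Finite {z : Circle | z ^ m = 1} := by
  have hC : Set.Finite {w : ℂ | w ^ m = 1} := by
    refine Set.Finite.subset (Polynomial.nthRoots m (1 : ℂ)).toFinset.finite_toSet ?_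
    intro w hw
    simp only [Multiset.mem_toFinset, Finset.mem_coe]
    rw [Polynomial.mem_nthRoots hm]
    exact hw
  have : {z : Circle | z ^ m = 1} = ((↑) : Circle → ℂ) ⁻¹' {w : ℂ | w ^ m = 1} := by
    ext z
    simp only [Set.mem_setOf_eq, Set.mem_preimage]
    constructor
    · intro h
      show ((z : ℂ)) ^ m = 1
      rw [← Circle.coe_pow, h, Circle.coe_one]
    · intro h
      refine Subtype.ext ?_
      show ((z ^ m : Circle) : ℂ) = ((1 : Circle) : ℂ)
      rw [Circle.coe_pow, Circle.coe_one]
      exact h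
  rw [this]
  exact Set.Finite.preimage (Set.injOn_of_injective Subtype.coe_injective) hC

/-- The `m`-torsion of the torus is finite. -/
lemma finite_torsion_torus (n m : ℕ) (hm : 0 < m) :
    Set.Finite {x : Fin n → Circle | x ^ m = 1} := by
  have : {x : Fin n → Circle | x ^ m = 1} =
      Set.pi Set.univ (fun _ : Fin n => {z : Circle | z ^ m = 1}) := by
    ext x
    simp only [Set.mem_setOf_eq, Set.mem_pi, Set.mem_univ, forall_true_left]
    constructor
    · intro h i
      have := congrFun h i
      simpa using this
    · intro h
      funext i
      simpa using h i
  rw [this]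
  exact Set.Finite.pi (fun _ => finite_torsion_circle m hm)

/-- A connected topological group acting continuously on the torus `Tⁿ = (Circle)ⁿ`
by group automorphisms acts trivially. -/
theorem connected_group_action_on_torus_by_automorphisms_trivial
    {G : Type*} [Group G] [TopologicalSpace G] [IsTopologicalGroup G]
    [ConnectedSpace G] (n : ℕ) (ρ : G →* MulAut (Fin n → Circle))
    (hcont : Continuous fun p : G × (Fin n → Circle) => ρ p.1 p.2) :
    ∀ g : G, ρ g = MulEquiv.refl (Fin n → Circle) := by
  intro g
  -- the action fixes every torsion point
  have hfix : ∀ x : Fin n → Circle, (∃ m : ℕ, 0 < m ∧ x ^ m = 1) → ρ g x = x := by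
    rintro x ⟨m, hm, hx⟩
    set S := {y : Fin n → Circle | y ^ m = 1} with hS
    have hSfin : Set.Finite S := finite_torsion_torus n m hm
    haveI : Finite S := hSfin.to_subtype
    haveI : DiscreteTopology S := inferInstance
    have hmem : ∀ h : G, ρ h x ∈ S := by
      intro h
      show (ρ h x) ^ m = 1
      rw [← map_pow (ρ h), hx, map_one]
    have hf : Continuous (fun h : G => (⟨ρ h x, hmem h⟩ : S)) := by
      refine Continuous.subtype_mk ?_ _
      exact hcont.comp (continuous_id.prodMk continuous_const)
    have hlc : IsLocallyConstant (fun h : G => (⟨ρ h x, hmem h⟩ : S)) :=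
      (IsLocallyConstant.iff_continuous _).mpr hf
    have := hlc.apply_eq_of_preconnectedSpace g 1
    have h1 : ρ g x = ρ 1 x := congrArg Subtype.val this
    rwa [map_one ρ, MulAut.one_apply] at h1
  -- continuity of `ρ g`
  have hcg : Continuous (fun x : Fin n → Circle => ρ g x) :=
    hcont.comp (continuous_const.prodMk continuous_id)
  have heq : (fun x : Fin n → Circle => ρ g x) = id :=
    Continuous.ext_on (dense_torsion_torus n) hcg continuous_id hfix
  exact MulEquiv.ext fun x => congrFun heq x
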